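/- A field k is algebraically closed if and only if every nonzero finitely generated commutative k-algebra admits a k-algebra homomorphism to k. -/

import Mathlib

/-- A field `k` is algebraically closed iff every nonzero finitely generated
commutative `k`-algebra admits a `k`-algebra homomorphism to `k`. -/
theorem stmt1 (k : Type) [Field k] :
    IsAlgClosed k ↔
      ∀ (A : Type) [CommRing A] [Algebra k A], Nontrivial A → Algebra.FiniteType k A →
        Nonempty (A →ₐ[k] k) := by
  constructor
  · intro hk A _ _ hA hft
    obtain ⟨m, hm⟩ := Ideal.exists_maximal A
    letI : Field (A ⧸ m) := Ideal.Quotient.field m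
    haveI : Algebra.FiniteType k (A ⧸ m) :=
      Algebra.FiniteType.of_surjective (Ideal.Quotient.mkₐ k m)
        (Ideal.Quotient.mkₐ_surjective k m)
    haveI : Module.Finite k (A ⧸ m) := finite_of_finite_type_of_isJacobsonRing k (A ⧸ m)
    haveI : Algebra.IsIntegral k (A ⧸ m) := Algebra.IsIntegral.of_finite k (A ⧸ m)
    have hsurj : Function.Surjective (algebraMap k (A ⧸ m)) :=
      IsAlgClosed.algebraMap_bijective_of_isIntegral.2
    have hbij : Function.Bijective (Algebra.ofId k (A ⧸ m)) :=
      ⟨(algebraMap k (A ⧸ m)).injective, hsurj⟩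
    let e : k ≃ₐ[k] (A ⧸ m) := AlgEquiv.ofBijective (Algebra.ofId k (A ⧸ m)) hbij
    exact ⟨(e.symm : (A ⧸ m) →ₐ[k] k).comp (Ideal.Quotient.mkₐ k m)⟩
  · intro H
    apply IsAlgClosed.of_exists_root
    intro p hmonic hirr
    let I : Ideal (Polynomial k) := Ideal.span {p}
    haveI : Nontrivial (Polynomial k ⧸ I) := by
      apply Ideal.Quotient.nontrivial_iff.mpr
      intro htop
      exact hirr.not_isUnit ((Ideal.span_singleton_eq_top).mp htop)
    haveI : Algebra.FiniteType k (Polynomial k ⧸ I) :=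
      Algebra.FiniteType.of_surjective
        (Ideal.Quotient.mkₐ k I) (Ideal.Quotient.mkₐ_surjective k I)
    obtain ⟨φ⟩ := H (Polynomial k ⧸ I) inferInstance inferInstance
    refine ⟨φ ((Ideal.Quotient.mkₐ k I) Polynomial.X), ?_⟩
    have h1 : Polynomial.aeval (φ ((Ideal.Quotient.mkₐ k I) Polynomial.X)) p
        = φ ((Ideal.Quotient.mkₐ k I) p) := by
      rw [Polynomial.aeval_algHom_apply, Polynomial.aeval_algHom_apply,
        Polynomial.aeval_X_left_apply]
    have h2 : (Ideal.Quotient.mkₐ k I) p = 0 := by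
      rw [Ideal.Quotient.mkₐ_eq_mk, Ideal.Quotient.eq_zero_iff_mem]
      exact Ideal.subset_span rfl
    have h3 : Polynomial.aeval (φ ((Ideal.Quotient.mkₐ k I) Polynomial.X)) p = 0 := by
      rw [h1, h2, map_zero]
    rw [Polynomial.coe_aeval_eq_eval] at h3; exact h3
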